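/- The σ-ideal J₀(λ) on the compactum [0,1] is not homogeneous, and the σ-ideals J₀(H¹) and J_f(H¹) on the compactum [0,1]² are not homogeneous. -/

import Mathlib

open MeasureTheory Topology Filter Set ENNReal

/-- `J₀(μ)`: Borel sets coverable by countably many compact sets of `μ`-measure zero. -/
def Jzero {X : Type*} [TopologicalSpace X] [MeasurableSpace X] (μ : Measure X) :
    Set (Set X) :=
  {A | MeasurableSet A ∧
    ∃ K : ℕ → Set X, (∀ n, IsCompact (K n) ∧ μ (K n) = 0) ∧ A ⊆ ⋃ n, K n}

/-- `J_f(μ)`: Borel sets coverable by countably many compact sets of finite `μ`-measure. -/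
def Jfin {X : Type*} [TopologicalSpace X] [MeasurableSpace X] (μ : Measure X) :
    Set (Set X) :=
  {A | MeasurableSet A ∧
    ∃ K : ℕ → Set X, (∀ n, IsCompact (K n) ∧ μ (K n) < ⊤) ∧ A ⊆ ⋃ n, K n}

/-- `μ` is semifinite: every Borel set of positive measure contains a Borel subset of
finite positive measure. -/
def Semifinite {X : Type*} [MeasurableSpace X] (μ : Measure X) : Prop :=
  ∀ A : Set X, MeasurableSet A → 0 < μ A →
    ∃ B ⊆ A, MeasurableSet B ∧ 0 < μ B ∧ μ B < ⊤

/-- The σ-ideal `I` on `X` is homogeneous: for every Borel `E ∉ I` there is a Borel map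
`f : X → X` with range contained in `E` such that `f⁻¹(A) ∈ I` whenever `A ∈ I`. -/
def IsHomogeneousIdeal {X : Type*} [TopologicalSpace X] [MeasurableSpace X]
    (I : Set (Set X)) : Prop :=
  ∀ E : Set X, MeasurableSet E → E ∉ I →
    ∃ f : X → X, Measurable f ∧ Set.range f ⊆ E ∧ ∀ A ∈ I, f ⁻¹' A ∈ I

/-- The Euclidean square `[0,1]²`, as a subspace of the Euclidean plane. -/
def SqSet : Set (EuclideanSpace ℝ (Fin 2)) := {x | ∀ i, x i ∈ Set.Icc (0 : ℝ) 1}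

open scoped NNReal


lemma baire_no_cover {X : Type*} [TopologicalSpace X] [BaireSpace X] [Nonempty X]
    {E : Set X} (hE : E ∈ residual X) {K : ℕ → Set X}
    (hK : ∀ n, IsClosed (K n) ∧ interior (K n) = ∅) (hcov : E ⊆ ⋃ n, K n) : False := by
  have hM : IsMeagre (⋃ n, K n) := by
    refine isMeagre_iUnion fun n => ?_
    have hnd : IsNowhereDense (K n) := (hK n).1.isNowhereDense_iff.mpr (hK n).2
    obtain ⟨ho, hd⟩ := isClosed_isNowhereDense_iff_compl.mp ⟨(hK n).1, hnd⟩
    exact residual_of_dense_open ho hd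
  have h3 : E ∩ (⋃ n, K n)ᶜ ∈ residual X := inter_mem hE hM
  rcases (dense_of_mem_residual h3).nonempty with ⟨x, hx, hxc⟩
  exact hxc (hcov hx)

lemma gen_not_homog {X : Type*} [MetricSpace X] [CompactSpace X] [Nonempty X]
    [MeasurableSpace X] [BorelSpace X] (P : Set X → Prop) (μ : Measure X) [IsFiniteMeasure μ]
    (hμpos : μ univ ≠ 0)
    (hμnull : ∀ K : Set X, IsCompact K → P K → μ K = 0)
    (hPnd : ∀ K : Set X, IsClosed K → P K → interior K = ∅)
    (E : Set X) (hEm : MeasurableSet E) (hEr : E ∈ residual X)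
    (hEsub : ∀ K : Set X, K ⊆ E → IsCompact K → P K) :
    ¬ (∀ E : Set X, MeasurableSet E →
        E ∉ {A : Set X | MeasurableSet A ∧
          ∃ K : ℕ → Set X, (∀ n, IsCompact (K n) ∧ P (K n)) ∧ A ⊆ ⋃ n, K n} →
        ∃ f : X → X, Measurable f ∧ Set.range f ⊆ E ∧
          ∀ A ∈ {A : Set X | MeasurableSet A ∧
            ∃ K : ℕ → Set X, (∀ n, IsCompact (K n) ∧ P (K n)) ∧ A ⊆ ⋃ n, K n},
            f ⁻¹' A ∈ {A : Set X | MeasurableSet A ∧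
              ∃ K : ℕ → Set X, (∀ n, IsCompact (K n) ∧ P (K n)) ∧ A ⊆ ⋃ n, K n}) := by
  set I : Set (Set X) := {A : Set X | MeasurableSet A ∧
    ∃ K : ℕ → Set X, (∀ n, IsCompact (K n) ∧ P (K n)) ∧ A ⊆ ⋃ n, K n} with hI
  intro h
  have hInull : ∀ A ∈ I, μ A = 0 := by
    rintro A ⟨-, K, hK, hcov⟩
    refine le_antisymm ((measure_mono hcov).trans ?_) zero_le
    refine (measure_iUnion_le K).trans ?_
    simp [fun n => hμnull (K n) (hK n).1 (hK n).2]
  have hEnotI : E ∉ I := by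
    rintro ⟨-, K, hK, hcov⟩
    exact baire_no_cover hEr
      (fun n => ⟨(hK n).1.isClosed, hPnd _ (hK n).1.isClosed (hK n).2⟩) hcov
  obtain ⟨f, hf, hrange, hpres⟩ := h E hEm hEnotI
  set ν : Measure X := μ.map f with hν
  haveI : IsFiniteMeasure ν := Measure.isFiniteMeasure_map μ f
  have hνE : ν E = μ univ := by
    rw [hν, Measure.map_apply hf hEm]
    congr 1
    exact eq_univ_of_forall fun x => hrange (mem_range_self x)
  have hνEpos : ν E ≠ 0 := hνE ▸ hμpos
  obtain ⟨K, hKE, hKcl, hlt⟩ := hEm.exists_isClosed_lt_add (μ := ν)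
    (by simp [hνE]) hνEpos
  have hνK : ν K ≠ 0 := by
    intro h0
    rw [h0, zero_add] at hlt
    exact hlt.false
  have hKcomp : IsCompact K := hKcl.isCompact
  have hKP : P K := hEsub K hKE hKcomp
  have hKI : K ∈ I := ⟨hKcl.measurableSet, fun _ => K, fun n => ⟨hKcomp, hKP⟩,
    subset_iUnion (fun _ : ℕ => K) 0⟩
  have := hInull _ (hpres K hKI)
  rw [← Measure.map_apply hf hKcl.measurableSet, ← hν] at this
  exact hνK this


lemma exists_H1null_residual (X : Type*) [MetricSpace X] [TopologicalSpace.SeparableSpace X]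
    [Nonempty X] [MeasurableSpace X] [BorelSpace X] :
    ∃ E : Set X, MeasurableSet E ∧ E ∈ residual X ∧ μH[1] E = 0 := by
  obtain ⟨q, hq⟩ := TopologicalSpace.exists_dense_seq X
  set U : ℕ → Set X := fun n => ⋃ k, EMetric.ball (q k) ((2: ℝ≥0∞)⁻¹ ^ (n + k + 2)) with hU
  have hUopen : ∀ n, IsOpen (U n) := fun n => isOpen_iUnion fun k => EMetric.isOpen_ball
  have hUdense : ∀ n, Dense (U n) := by
    intro n
    refine hq.mono ?_
    rintro x ⟨k, rfl⟩
    exact mem_iUnion.2 ⟨k, EMetric.mem_ball_self (ENNReal.pow_pos (by norm_num) _)⟩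
  refine ⟨⋂ n, U n, MeasurableSet.iInter fun n => (hUopen n).measurableSet,
    countable_iInter_mem.2 fun n => residual_of_dense_open (hUopen n) (hUdense n), ?_⟩
  have hdiam : ∀ n k : ℕ, EMetric.diam (EMetric.ball (q k) ((2: ℝ≥0∞)⁻¹ ^ (n + k + 2)))
      ≤ (2: ℝ≥0∞)⁻¹ ^ (n + k + 1) := by
    intro n k
    refine (EMetric.diam_ball).trans (le_of_eq ?_)
    rw [pow_succ, mul_comm ((2:ℝ≥0∞)⁻¹ ^ (n + k + 1)), ← mul_assoc,
      ENNReal.mul_inv_cancel (by norm_num) (by norm_num), one_mul]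
  have key := Measure.hausdorffMeasure_le_liminf_tsum (X := X) 1 (⋂ n, U n)
    (l := atTop) (fun n => (2: ℝ≥0∞)⁻¹ ^ n)
    (ENNReal.tendsto_pow_atTop_nhds_zero_of_lt_one (by norm_num))
    (fun n k => EMetric.ball (q k) ((2: ℝ≥0∞)⁻¹ ^ (n + k + 2)))
    (Eventually.of_forall fun n k => (hdiam n k).trans
      (pow_le_pow_right_of_le_one' (ENNReal.inv_le_one.2 ENNReal.one_lt_two.le) (by omega)))
    (Eventually.of_forall fun n => iInter_subset U n)
  refine le_antisymm (key.trans ?_) zero_le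
  have hsum : ∀ n : ℕ, (∑' k, EMetric.diam
      (EMetric.ball (q k) ((2: ℝ≥0∞)⁻¹ ^ (n + k + 2))) ^ (1 : ℝ)) ≤ (2: ℝ≥0∞)⁻¹ ^ n := by
    intro n
    calc (∑' k, EMetric.diam (EMetric.ball (q k) ((2: ℝ≥0∞)⁻¹ ^ (n + k + 2))) ^ (1 : ℝ))
        ≤ ∑' k : ℕ, (2: ℝ≥0∞)⁻¹ ^ (n + k + 1) := by
          refine Summable.tsum_le_tsum (fun k => ?_) ENNReal.summable ENNReal.summable
          rw [ENNReal.rpow_one]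
          exact hdiam n k
      _ = (2: ℝ≥0∞)⁻¹ ^ (n + 1) * ∑' k : ℕ, (2: ℝ≥0∞)⁻¹ ^ k := by
          rw [← ENNReal.tsum_mul_left]
          congr 1 with k
          rw [← pow_add]
          congr 1
          omega
      _ = (2: ℝ≥0∞)⁻¹ ^ (n + 1) * 2 := by
          rw [ENNReal.tsum_geometric]
          congr 1
          rw [← ENNReal.one_sub_inv_two]
          simp
      _ = (2: ℝ≥0∞)⁻¹ ^ n * ((2: ℝ≥0∞)⁻¹ * 2) := by rw [pow_succ]; ring
      _ ≤ (2: ℝ≥0∞)⁻¹ ^ n := by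
          simp [ENNReal.inv_mul_cancel]
  calc liminf (fun n => ∑' k, EMetric.diam
        (EMetric.ball (q k) ((2: ℝ≥0∞)⁻¹ ^ (n + k + 2))) ^ (1 : ℝ)) atTop
      ≤ liminf (fun n => (2: ℝ≥0∞)⁻¹ ^ n) atTop :=
        liminf_le_liminf (Eventually.of_forall hsum)
    _ = 0 := (ENNReal.tendsto_pow_atTop_nhds_zero_of_lt_one (by norm_num)).liminf_eq


lemma I_volume_image (A : Set unitInterval) :
    (volume : Measure unitInterval) A = volume (Subtype.val '' A) := by
  rw [unitInterval.volume_def]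
  exact (MeasurableEmbedding.subtype_coe measurableSet_Icc).comap_apply _ _

lemma I_volume_eq_H1 (A : Set unitInterval) :
    (volume : Measure unitInterval) A = μH[1] A := by
  rw [I_volume_image, ← isometry_subtype_coe.hausdorffMeasure_image (Or.inl zero_le_one) A,
    MeasureTheory.hausdorffMeasure_real]

lemma I_ball_pos (x : unitInterval) {ε : ℝ} (hε : 0 < ε) :
    (volume : Measure unitInterval) (Metric.ball x ε) ≠ 0 := by
  rw [I_volume_image]
  set a : ℝ := max ((x:ℝ) - ε) 0 with ha
  set b : ℝ := min ((x:ℝ) + ε) 1 with hb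
  have hx0 : (0:ℝ) ≤ x := x.2.1
  have hx1 : (x:ℝ) ≤ 1 := x.2.2
  have hab : a < b := by
    rw [ha, hb]
    apply max_lt <;> apply lt_min
    · linarith
    · linarith
    · linarith
    · norm_num
  have hsub : Ioo a b ⊆ Subtype.val '' (Metric.ball x ε) := by
    intro y hy
    have hy1 : a < y := hy.1
    have hy2 : y < b := hy.2
    have hyI : y ∈ Set.Icc (0:ℝ) 1 :=
      ⟨le_of_lt (lt_of_le_of_lt (le_max_right _ _) hy1),
       le_of_lt (lt_of_lt_of_le hy2 (min_le_right _ _))⟩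
    refine ⟨⟨y, hyI⟩, ?_, rfl⟩
    rw [Metric.mem_ball, Subtype.dist_eq, Real.dist_eq, abs_sub_lt_iff]
    constructor
    · have : y < (x:ℝ) + ε := lt_of_lt_of_le hy2 (min_le_left _ _)
      linarith
    · have : (x:ℝ) - ε < y := lt_of_le_of_lt (le_max_left _ _) hy1
      linarith
  intro h0
  have := measure_mono (μ := (volume : Measure ℝ)) hsub
  rw [h0, le_zero_iff, Real.volume_Ioo] at this
  simp only [ENNReal.ofReal_eq_zero] at this
  linarith




lemma sq_closed : IsClosed SqSet := by
  have : SqSet = ⋂ i, (EuclideanSpace.proj (𝕜 := ℝ) i) ⁻¹' Set.Icc (0:ℝ) 1 := by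
    ext x
    simp [SqSet]
  rw [this]
  exact isClosed_iInter fun i => isClosed_Icc.preimage (EuclideanSpace.proj i).continuous

instance : CompactSpace SqSet := by
  rw [← isCompact_iff_compactSpace]
  refine IsCompact.of_isClosed_subset (isCompact_closedBall (0 : EuclideanSpace ℝ (Fin 2)) 2)
    sq_closed ?_
  intro x hx
  have h0 : ∀ i, dist (x i) ((0 : EuclideanSpace ℝ (Fin 2)) i) ≤ 1 := by
    intro i
    have := hx i
    simp only [Real.dist_eq]
    rw [show ((0 : EuclideanSpace ℝ (Fin 2)) i) = 0 from rfl, sub_zero]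
    rw [abs_le]
    constructor <;> [linarith [this.1]; exact this.2]
  rw [Metric.mem_closedBall, EuclideanSpace.dist_eq, Fin.sum_univ_two]
  have h1 := h0 0
  have h2 := h0 1
  have hs : dist (x 0) ((0 : EuclideanSpace ℝ (Fin 2)) 0) ^ 2
      + dist (x 1) ((0 : EuclideanSpace ℝ (Fin 2)) 1) ^ 2 ≤ 4 := by
    nlinarith [dist_nonneg (x := x 0) (y := (0 : EuclideanSpace ℝ (Fin 2)) 0),
      dist_nonneg (x := x 1) (y := (0 : EuclideanSpace ℝ (Fin 2)) 1)]
  calc √(dist (x 0) ((0 : EuclideanSpace ℝ (Fin 2)) 0) ^ 2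
      + dist (x 1) ((0 : EuclideanSpace ℝ (Fin 2)) 1) ^ 2) ≤ √4 := Real.sqrt_le_sqrt hs
    _ = 2 := by rw [show (4:ℝ) = 2^2 by norm_num, Real.sqrt_sq (by norm_num)]

instance : Nonempty SqSet :=
  ⟨⟨(WithLp.equiv 2 (Fin 2 → ℝ)).symm (fun _ => 0), fun i => by
    rw [WithLp.equiv_symm_apply, PiLp.toLp_apply]
    exact ⟨le_refl 0, zero_le_one⟩⟩⟩

lemma sq_hsub (d : ℝ) (hd : 0 ≤ d) (A : Set SqSet) :
    μH[d] (Subtype.val '' A) = μH[d] A :=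
  isometry_subtype_coe.hausdorffMeasure_image (Or.inl hd) A

lemma sq_ball_image (x : SqSet) (ε : ℝ) :
    (Subtype.val '' (Metric.ball x ε)) = Metric.ball (x : EuclideanSpace ℝ (Fin 2)) ε ∩ SqSet := by
  ext y
  constructor
  · rintro ⟨p, hp, rfl⟩
    exact ⟨by rwa [Metric.mem_ball, ← Subtype.dist_eq], p.2⟩
  · rintro ⟨hy, hyS⟩
    exact ⟨⟨y, hyS⟩, by rwa [Metric.mem_ball, Subtype.dist_eq], rfl⟩

lemma h2pi : (μH[(2:ℝ)] : Measure (Fin 2 → ℝ)) = volume := by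
  have := MeasureTheory.hausdorffMeasure_pi_real (ι := Fin 2)
  simpa using this

lemma equiv_symm_lipschitz :
    ∃ C : ℝ≥0, LipschitzWith C ⇑(WithLp.equiv 2 (Fin 2 → ℝ)).symm := by
  have h := PiLp.antilipschitzWith_ofLp 2 (fun _ : Fin 2 => ℝ)
  exact ⟨_, fun z w => by
    simpa using h ((WithLp.equiv 2 (Fin 2 → ℝ)).symm z) ((WithLp.equiv 2 (Fin 2 → ℝ)).symm w)⟩

lemma sq_eq_symm_image :
    SqSet = ⇑(WithLp.equiv 2 (Fin 2 → ℝ)).symm '' (Set.pi univ (fun _ : Fin 2 => Set.Icc (0:ℝ) 1)) := by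
  ext x
  constructor
  · intro hx
    refine ⟨WithLp.equiv 2 (Fin 2 → ℝ) x, fun i _ => ?_, (WithLp.equiv 2 (Fin 2 → ℝ)).symm_apply_apply x⟩
    change x.ofLp i ∈ _
    exact hx i
  · rintro ⟨z, hz, rfl⟩
    intro i
    rw [WithLp.equiv_symm_apply, PiLp.toLp_apply]
    exact hz i (mem_univ i)

lemma sq_H2_univ_lt_top : (μH[(2:ℝ)] : Measure SqSet) univ < ⊤ := by
  obtain ⟨C, hC⟩ := equiv_symm_lipschitz
  rw [← sq_hsub 2 (by norm_num), image_univ, Subtype.range_coe, sq_eq_symm_image]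
  refine lt_of_le_of_lt (hC.hausdorffMeasure_image_le (by norm_num) _) ?_
  rw [h2pi, volume_pi_pi]
  simp only [Real.volume_Icc, sub_zero, ENNReal.ofReal_one, Finset.prod_const_one, mul_one]
  exact ENNReal.rpow_lt_top_of_nonneg (by norm_num) ENNReal.coe_ne_top

lemma sq_H2_ball_ne_zero (x : SqSet) {ε : ℝ} (hε : 0 < ε) :
    (μH[(2:ℝ)] : Measure SqSet) (Metric.ball x ε) ≠ 0 := by
  set S : Set (EuclideanSpace ℝ (Fin 2)) := Subtype.val '' (Metric.ball x ε) with hS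
  have hkey : μH[(2:ℝ)] S ≠ 0 := by
    set τ : ℝ := min (1/2) (ε/4) with hτ
    have hτ0 : 0 < τ := lt_min (by norm_num) (by linarith)
    have hτh : τ ≤ 1/2 := min_le_left _ _
    have hτε : τ ≤ ε/4 := min_le_right _ _
    set y : Fin 2 → ℝ := fun i => (1 - τ) * ((x : EuclideanSpace ℝ (Fin 2)) i) + τ/2 with hy
    set B : Set (Fin 2 → ℝ) := Set.pi univ (fun i => Ioo (y i - τ/4) (y i + τ/4)) with hB
    have hBsub : B ⊆ ⇑(WithLp.equiv 2 (Fin 2 → ℝ)) '' S := by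
      intro z hz
      set w : EuclideanSpace ℝ (Fin 2) := (WithLp.equiv 2 (Fin 2 → ℝ)).symm z with hw
      have hwi : ∀ i, w i = z i := fun i => rfl
      have hxi : ∀ i, (x : EuclideanSpace ℝ (Fin 2)) i ∈ Set.Icc (0:ℝ) 1 := x.2
      have hyb : ∀ i, τ/2 ≤ y i ∧ y i ≤ 1 - τ/2 := by
        intro i
        simp only [hy]
        have h1 := (hxi i).1
        have h2 := (hxi i).2
        constructor
        · nlinarith [mul_nonneg (show (0:ℝ) ≤ 1 - τ by linarith) h1]
        · nlinarith [mul_le_mul_of_nonneg_left h2 (show (0:ℝ) ≤ 1 - τ by linarith)]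
      have hzi : ∀ i, |z i - (x : EuclideanSpace ℝ (Fin 2)) i| ≤ 3*τ/4 := by
        intro i
        have hz1 := (hz i (mem_univ i)).1
        have hz2 := (hz i (mem_univ i)).2
        simp only [hy] at hz1 hz2
        have h1 := (hxi i).1
        have h2 := (hxi i).2
        rw [abs_le]
        constructor
        · nlinarith [mul_le_mul_of_nonneg_left h2 hτ0.le]
        · nlinarith [mul_nonneg hτ0.le h1]
      have hwS : w ∈ SqSet := by
        intro i
        rw [hwi i]
        have hz1 := (hz i (mem_univ i)).1
        have hz2 := (hz i (mem_univ i)).2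
        have hy1 := (hyb i).1
        have hy2 := (hyb i).2
        constructor <;> [linarith; linarith]
      have hwball : dist w (x : EuclideanSpace ℝ (Fin 2)) < ε := by
        rw [EuclideanSpace.dist_eq, Fin.sum_univ_two, Real.dist_eq, Real.dist_eq, hwi 0, hwi 1]
        have h0 := hzi 0
        have h1 := hzi 1
        have habs0 : |z 0 - (x : EuclideanSpace ℝ (Fin 2)) 0| ^ 2 ≤ (3*τ/4)^2 := by
          have := abs_nonneg (z 0 - (x : EuclideanSpace ℝ (Fin 2)) 0)
          nlinarith
        have habs1 : |z 1 - (x : EuclideanSpace ℝ (Fin 2)) 1| ^ 2 ≤ (3*τ/4)^2 := by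
          have := abs_nonneg (z 1 - (x : EuclideanSpace ℝ (Fin 2)) 1)
          nlinarith
        calc √(|z 0 - (x : EuclideanSpace ℝ (Fin 2)) 0| ^ 2
              + |z 1 - (x : EuclideanSpace ℝ (Fin 2)) 1| ^ 2)
            ≤ √(2 * (3*τ/4)^2) := Real.sqrt_le_sqrt (by linarith)
          _ < √(ε^2) := by
              apply Real.sqrt_lt_sqrt (by positivity)
              nlinarith
          _ = ε := Real.sqrt_sq hε.le
      refine ⟨w, ?_, (WithLp.equiv 2 (Fin 2 → ℝ)).apply_symm_apply z⟩
      rw [hS, sq_ball_image]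
      exact ⟨by rwa [Metric.mem_ball], hwS⟩
    intro h0
    have hle := (PiLp.lipschitzWith_ofLp 2 (fun _ : Fin 2 => ℝ)).hausdorffMeasure_image_le
      (by norm_num : (0:ℝ) ≤ 2) S
    rw [h0, mul_zero] at hle
    have hvol : volume B ≠ 0 := by
      rw [hB, volume_pi_pi]
      simp only [Real.volume_Ioo]
      rw [Finset.prod_ne_zero_iff]
      intro i _
      rw [Ne, ENNReal.ofReal_eq_zero, not_le]
      linarith
    apply hvol
    have h2 : volume (⇑(WithLp.equiv 2 (Fin 2 → ℝ)) '' S) ≤ 0 := by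
      rw [← h2pi]
      exact hle
    exact le_antisymm ((measure_mono (μ := (volume : Measure (Fin 2 → ℝ))) hBsub).trans h2)
      zero_le
  rw [hS, sq_hsub 2 (by norm_num)] at hkey
  exact hkey


noncomputable def gseg : ℝ → EuclideanSpace ℝ (Fin 2) :=
  fun t => (WithLp.equiv 2 (Fin 2 → ℝ)).symm (fun i => if i = 0 then t else 0)

lemma gseg_apply (t : ℝ) (i : Fin 2) : gseg t i = if i = 0 then t else 0 := by
  rw [gseg, WithLp.equiv_symm_apply, PiLp.toLp_apply]

lemma gseg_isometry : Isometry gseg := by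
  refine Isometry.of_dist_eq fun s t => ?_
  rw [EuclideanSpace.dist_eq, Fin.sum_univ_two, gseg_apply, gseg_apply, gseg_apply, gseg_apply]
  norm_num

def Lseg : Set SqSet := {p | (p : EuclideanSpace ℝ (Fin 2)) 1 = 0}

lemma Lseg_image : Subtype.val '' Lseg = gseg '' Set.Icc (0:ℝ) 1 := by
  ext y
  constructor
  · rintro ⟨p, hp, rfl⟩
    refine ⟨(p : EuclideanSpace ℝ (Fin 2)) 0, p.2 0, ?_⟩
    apply PiLp.ext
    intro i
    fin_cases i
    · simp [gseg_apply]
    · simp [gseg_apply, show (p : EuclideanSpace ℝ (Fin 2)) 1 = 0 from hp]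
  · rintro ⟨t, ht, rfl⟩
    have hmem : gseg t ∈ SqSet := by
      intro i
      fin_cases i
      · simpa [gseg_apply] using ht
      · norm_num [gseg_apply]
    refine ⟨⟨gseg t, hmem⟩, ?_, rfl⟩
    show gseg t 1 = 0
    rw [gseg_apply]
    norm_num

lemma Lseg_H1 : μH[1] Lseg = 1 := by
  rw [← sq_hsub 1 zero_le_one, Lseg_image,
    gseg_isometry.hausdorffMeasure_image (Or.inl zero_le_one),
    MeasureTheory.hausdorffMeasure_real, Real.volume_Icc]
  norm_num

lemma sq_H1_ball_ne_zero (x : SqSet) {ε : ℝ} (hε : 0 < ε) :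
    μH[1] (Metric.ball x ε) ≠ 0 := by
  set x0 : ℝ := (x : EuclideanSpace ℝ (Fin 2)) 0 with hx0def
  have hx0 : x0 ∈ Set.Icc (0:ℝ) 1 := x.2 0
  set a : ℝ := max (x0 - ε/2) 0 with ha
  set b : ℝ := min (x0 + ε/2) 1 with hb
  have hab : a < b := by
    rw [ha, hb]
    apply max_lt <;> apply lt_min
    · linarith
    · linarith [hx0.2]
    · linarith [hx0.1]
    · norm_num
  set proj : SqSet → ℝ := fun p => (p : EuclideanSpace ℝ (Fin 2)) 0 with hproj
  have hlip : LipschitzWith (‖(EuclideanSpace.proj (0 : Fin 2) :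
      EuclideanSpace ℝ (Fin 2) →L[ℝ] ℝ)‖₊ * 1) proj :=
    (EuclideanSpace.proj (0 : Fin 2) :
      EuclideanSpace ℝ (Fin 2) →L[ℝ] ℝ).lipschitz.comp isometry_subtype_coe.lipschitz
  have himg : Ioo a b ⊆ proj '' (Metric.ball x ε) := by
    intro t ht
    have ht1 : x0 - ε/2 < t := lt_of_le_of_lt (le_max_left _ _) ht.1
    have ht2 : t < x0 + ε/2 := lt_of_lt_of_le ht.2 (min_le_left _ _)
    have htI : t ∈ Set.Icc (0:ℝ) 1 :=
      ⟨le_of_lt (lt_of_le_of_lt (le_max_right _ _) ht.1),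
       le_of_lt (lt_of_lt_of_le ht.2 (min_le_right _ _))⟩
    set y : EuclideanSpace ℝ (Fin 2) := WithLp.toLp 2 (Function.update (x : EuclideanSpace ℝ (Fin 2)).ofLp 0 t) with hy
    have hyS : y ∈ SqSet := by
      intro i
      rcases eq_or_ne i 0 with rfl | hne
      · rw [hy, PiLp.toLp_apply, Function.update_self]; exact htI
      · rw [hy, PiLp.toLp_apply, Function.update_of_ne hne]; exact x.2 i
    have hydist : dist y (x : EuclideanSpace ℝ (Fin 2)) < ε := by
      rw [EuclideanSpace.dist_eq, Fin.sum_univ_two]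
      have e0 : dist (y 0) ((x : EuclideanSpace ℝ (Fin 2)) 0) = |t - x0| := by
        rw [hy, PiLp.toLp_apply, Function.update_self, Real.dist_eq]
      have e1 : dist (y 1) ((x : EuclideanSpace ℝ (Fin 2)) 1) = 0 := by
        rw [hy, PiLp.toLp_apply, Function.update_of_ne (by norm_num), dist_self]
      rw [e0, e1]
      have : |t - x0| < ε/2 := abs_sub_lt_iff.2 ⟨by linarith, by linarith⟩
      calc √(|t - x0| ^ 2 + 0 ^ 2) = |t - x0| := by
            rw [show |t - x0| ^ 2 + 0 ^ 2 = |t - x0| ^ 2 by ring]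
            exact Real.sqrt_sq (abs_nonneg _)
        _ < ε := by linarith
    refine ⟨⟨y, hyS⟩, ?_, ?_⟩
    · rwa [Metric.mem_ball, Subtype.dist_eq]
    · show y 0 = t
      rw [hy, PiLp.toLp_apply, Function.update_self]
  intro h0
  have hbound := hlip.hausdorffMeasure_image_le zero_le_one (Metric.ball x ε)
  rw [h0, mul_zero] at hbound
  have h1 : (μH[1] : Measure ℝ) (Ioo a b) = ENNReal.ofReal (b - a) := by
    rw [MeasureTheory.hausdorffMeasure_real, Real.volume_Ioo]
  have hfin := (measure_mono (μ := (μH[1] : Measure ℝ)) himg).trans hbound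
  rw [h1, le_zero_iff, ENNReal.ofReal_eq_zero] at hfin
  linarith

/-- Corollary 6.2: the σ-ideal `J₀(λ)` on `[0,1]` is not homogeneous, and the σ-ideals
`J₀(H¹)` and `J_f(H¹)` on the Euclidean square `[0,1]²` are not homogeneous. -/
theorem statement9 :
    ¬ IsHomogeneousIdeal (Jzero (volume : Measure unitInterval)) ∧
    ¬ IsHomogeneousIdeal (Jzero (μH[1] : Measure SqSet)) ∧
    ¬ IsHomogeneousIdeal (Jfin (μH[1] : Measure SqSet)) := by
  refine ⟨?_, ?_, ?_⟩
  · -- J₀(λ) on [0,1]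
    obtain ⟨E, hEm, hEr, hE0⟩ := exists_H1null_residual unitInterval
    have hPnd : ∀ K : Set unitInterval, IsClosed K → volume K = 0 → interior K = ∅ := by
      intro K hKcl hK0
      by_contra hne
      obtain ⟨x, hx⟩ := nonempty_iff_ne_empty.2 hne
      obtain ⟨ε, hε, hball⟩ := Metric.mem_nhds_iff.1 (mem_interior_iff_mem_nhds.1 hx)
      refine I_ball_pos x hε (le_antisymm ?_ zero_le)
      calc volume (Metric.ball x ε) ≤ volume K := measure_mono hball
        _ = 0 := hK0
    exact gen_not_homog (fun s => volume s = 0) volume (by simp) (fun K _ h => h) hPnd E hEm hEr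
      (fun K hKE _ => by
        show volume K = 0
        rw [I_volume_eq_H1]
        exact le_antisymm (hE0 ▸ measure_mono hKE) zero_le)
  · -- J₀(H¹) on the square
    obtain ⟨E, hEm, hEr, hE0⟩ := exists_H1null_residual SqSet
    have hPnd : ∀ K : Set SqSet, IsClosed K → μH[1] K = 0 → interior K = ∅ := by
      intro K hKcl hK0
      by_contra hne
      obtain ⟨x, hx⟩ := nonempty_iff_ne_empty.2 hne
      obtain ⟨ε, hε, hball⟩ := Metric.mem_nhds_iff.1 (mem_interior_iff_mem_nhds.1 hx)
      exact sq_H1_ball_ne_zero x hε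
        (le_antisymm ((measure_mono hball).trans hK0.le) zero_le)
    haveI : IsFiniteMeasure ((μH[1] : Measure SqSet).restrict Lseg) := ⟨by
      rw [Measure.restrict_apply_univ, Lseg_H1]
      exact one_lt_top⟩
    exact gen_not_homog (fun s => μH[1] s = 0) ((μH[1] : Measure SqSet).restrict Lseg)
      (by rw [Measure.restrict_apply_univ, Lseg_H1]; exact one_ne_zero)
      (fun K _ hK =>
        le_antisymm ((Measure.le_iff'.1 Measure.restrict_le_self K).trans hK.le) zero_le)
      hPnd E hEm hEr
      (fun K hKE _ => le_antisymm (hE0 ▸ measure_mono hKE) zero_le)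
  · -- J_f(H¹) on the square
    obtain ⟨E, hEm, hEr, hE0⟩ := exists_H1null_residual SqSet
    have hPnd : ∀ K : Set SqSet, IsClosed K → μH[1] K < ⊤ → interior K = ∅ := by
      intro K hKcl hK0
      by_contra hne
      obtain ⟨x, hx⟩ := nonempty_iff_ne_empty.2 hne
      obtain ⟨ε, hε, hball⟩ := Metric.mem_nhds_iff.1 (mem_interior_iff_mem_nhds.1 hx)
      have htop : μH[1] (Metric.ball x ε) = ⊤ :=
        (MeasureTheory.Measure.hausdorffMeasure_zero_or_top (show (1:ℝ) < 2 by norm_num)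
          (Metric.ball x ε)).resolve_left (sq_H2_ball_ne_zero x hε)
      have hle := measure_mono (μ := (μH[1] : Measure SqSet)) hball
      rw [htop, top_le_iff] at hle
      rw [hle] at hK0
      exact hK0.false
    haveI : IsFiniteMeasure (μH[(2:ℝ)] : Measure SqSet) := ⟨sq_H2_univ_lt_top⟩
    refine gen_not_homog (fun s => μH[1] s < ⊤) (μH[(2:ℝ)] : Measure SqSet) ?_ ?_ hPnd E hEm hEr
      (fun K hKE _ => lt_of_le_of_lt ((measure_mono hKE).trans hE0.le) ENNReal.zero_lt_top)
    · intro h0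
      refine sq_H2_ball_ne_zero (Classical.arbitrary SqSet) one_pos
        (le_antisymm ?_ zero_le)
      exact (measure_mono (subset_univ _)).trans h0.le
    · exact fun K _ hK =>
        (MeasureTheory.Measure.hausdorffMeasure_zero_or_top (show (1:ℝ) < 2 by norm_num)
          K).resolve_right hK.ne
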